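/- For all integers n ≥ 0 and k ≥ 1, C(n+k, k)_F equals the determinant of the k×k matrix B (rows and columns indexed 1,…,k) defined by B(i,j) = (−1)^{(i−j+1)(i−j)/2} C(n+1, i−j+1)_F for i ≥ j, B(i, i+1) = 1, and B(i,j) = 0 for j > i+1. -/

import Mathlib

/-- The Fibonomial coefficient `C(n,k)_F = ∏_{r=1}^{k} F_{n-r+1}/F_r`, as a real number.
It equals `0` when `k > n` and `1` when `k = 0`. -/
noncomputable def fibonomial (n k : ℕ) : ℝ :=
  ∏ r ∈ Finset.range k, (Nat.fib (n - r) : ℝ) / (Nat.fib (r + 1) : ℝ)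


open Real goldenRatio Finset

noncomputable def gq : ℝ := goldenConj / goldenRatio

lemma abs_gq_lt_one : |gq| < 1 := by
  rw [gq, abs_div, abs_of_pos goldenRatio_pos, div_lt_one goldenRatio_pos]
  have h1 : |ψ| < 1 := abs_lt.2 ⟨neg_one_lt_goldenConj, by nlinarith [goldenConj_neg]⟩
  linarith [one_lt_goldenRatio]

lemma one_sub_gq_pow_ne_zero {m : ℕ} (hm : 1 ≤ m) : (1 : ℝ) - gq ^ m ≠ 0 := by
  have h : |gq ^ m| < 1 := by
    rw [abs_pow]
    calc |gq| ^ m ≤ |gq| ^ 1 := pow_le_pow_of_le_one (abs_nonneg _) abs_gq_lt_one.le hm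
    _ < 1 := by simpa using abs_gq_lt_one
  intro h0
  have : gq ^ m = 1 := by linarith [sub_eq_zero.mp h0]
  rw [this] at h; simp at h

noncomputable def qb (N k : ℕ) : ℝ := ∏ r ∈ range k, (1 - gq ^ (N - r)) / (1 - gq ^ (r + 1))

lemma qb_zero (N : ℕ) : qb N 0 = 1 := by simp [qb]

lemma qb_eq_zero {N k : ℕ} (h : N < k) : qb N k = 0 := by
  apply Finset.prod_eq_zero (Finset.mem_range.mpr h)
  simp

lemma qb_split (N k : ℕ) :
    qb N k = (∏ r ∈ range k, (1 - gq ^ (N - r))) / (∏ r ∈ range k, (1 - gq ^ (r + 1))) := by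
  rw [qb, Finset.prod_div_distrib]

lemma den_ne_zero (k : ℕ) : (∏ r ∈ range k, (1 - gq ^ (r + 1))) ≠ 0 := by
  apply Finset.prod_ne_zero_iff.mpr
  intro r _
  exact one_sub_gq_pow_ne_zero (by omega)

lemma qb_self (N : ℕ) : qb N N = 1 := by
  rw [qb_split]
  rw [show (∏ r ∈ range N, (1 - gq ^ (N - r))) = ∏ r ∈ range N, (1 - gq ^ (r + 1)) by
    rw [← Finset.prod_range_reflect]
    apply Finset.prod_congr rfl
    intro r hr
    rw [Finset.mem_range] at hr
    congr 2
    omega]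
  exact div_self (den_ne_zero N)

lemma qb_pascal (N k : ℕ) : qb (N + 1) (k + 1) = qb N (k + 1) + gq ^ (N - k) * qb N k := by
  rcases le_or_gt k N with h | h
  · have hnum : (∏ r ∈ range (k+1), (1 - gq ^ (N + 1 - r)))
        = (1 - gq ^ (N + 1)) * ∏ r ∈ range k, (1 - gq ^ (N - r)) := by
      rw [Finset.prod_range_succ']
      simp only [Nat.add_sub_add_right, Nat.sub_zero]
      ring
    have hnum2 : (∏ r ∈ range (k+1), (1 - gq ^ (N - r)))
        = (∏ r ∈ range k, (1 - gq ^ (N - r))) * (1 - gq ^ (N - k)) := Finset.prod_range_succ _ _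
    have hden : (∏ r ∈ range (k+1), (1 - gq ^ (r + 1)))
        = (∏ r ∈ range k, (1 - gq ^ (r + 1))) * (1 - gq ^ (k + 1)) := Finset.prod_range_succ _ _
    rw [qb_split, qb_split, qb_split, hnum, hnum2, hden]
    set x := ∏ r ∈ range k, (1 - gq ^ (N - r)) with hx
    set d := ∏ r ∈ range k, (1 - gq ^ (r + 1)) with hd
    have hd0 : d ≠ 0 := den_ne_zero k
    have ha0 : (1 - gq ^ (k+1)) ≠ 0 := one_sub_gq_pow_ne_zero (by omega)
    have hgq : gq ^ (N - k) * gq ^ (k + 1) = gq ^ (N + 1) := by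
      rw [← pow_add]; congr 1; omega
    have key : (1 - gq^(N+1)) = (1 - gq^(N-k)) + gq^(N-k) * (1 - gq^(k+1)) := by
      rw [mul_sub, mul_one, hgq]; ring
    rw [key]
    field_simp
  · rw [qb_eq_zero (by omega), qb_eq_zero (by omega), qb_eq_zero (by omega)]
    ring

lemma tri (m : ℕ) : (m + 1) * m / 2 = m * (m - 1) / 2 + m := by
  induction m with
  | zero => rfl
  | succ m ih =>
    have h1 : (m + 1 + 1) * (m + 1) = (m + 1) * m + 2 * (m + 1) := by ring
    have h2 : (m + 1) * (m + 1 - 1) = (m + 1) * m := by simp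
    rw [h1, h2]
    omega

lemma negpow {a b : ℕ} (h : a % 2 = b % 2) : ((-1 : ℝ)) ^ a = (-1) ^ b := by
  rw [← Nat.div_add_mod a 2, ← Nat.div_add_mod b 2, h, pow_add, pow_add, pow_mul, pow_mul]
  norm_num

noncomputable def eE (n m : ℕ) : ℝ := (-1) ^ m * gq ^ (m * (m - 1) / 2) * qb (n + 1) m

noncomputable def PP (n s : ℕ) : ℝ :=
  ∑ m ∈ range (s + 1), eE n m * qb (n + (s - m)) (s - m)

noncomputable def QQ (n s : ℕ) : ℝ :=
  ∑ m ∈ range (s + 1), eE n m * qb (n + 1 + (s - m)) (s - m)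

lemma eE_succ (n m : ℕ) : eE (n + 1) (m + 1) = eE n (m + 1) - gq ^ (n + 1) * eE n m := by
  unfold eE
  rw [qb_pascal (n + 1) m]
  simp only [Nat.add_sub_cancel]
  rcases le_or_gt m (n + 1) with h | h
  · have hexp : gq ^ ((m + 1) * m / 2) * gq ^ (n + 1 - m) = gq ^ (n + 1) * gq ^ (m * (m - 1) / 2) := by
      rw [← pow_add, ← pow_add]
      congr 1
      have := tri m
      omega
    linear_combination ((-1 : ℝ) ^ (m + 1) * qb (n + 1) m) * hexp
  · rw [qb_eq_zero (show n + 1 < m from h)]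
    ring

lemma h_pascal (n t : ℕ) :
    qb (n + 1 + (t + 1)) (t + 1) = qb (n + (t + 1)) (t + 1) + gq ^ (n + 1) * qb (n + 1 + t) t := by
  have h := qb_pascal (n + t + 1) t
  rw [show n + t + 1 - t = n + 1 by omega] at h
  rw [show n + 1 + (t + 1) = n + t + 1 + 1 by omega, show n + (t + 1) = n + t + 1 by omega,
    show n + 1 + t = n + t + 1 by omega]
  exact h

lemma R1 (n s : ℕ) (hs : 1 ≤ s) : PP (n + 1) s = QQ n s - gq ^ (n + 1) * QQ n (s - 1) := by
  obtain ⟨t, rfl⟩ : ∃ t, s = t + 1 := ⟨s - 1, by omega⟩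
  simp only [Nat.add_sub_cancel]
  unfold PP QQ
  rw [Finset.sum_range_succ']
  conv_rhs => rw [Finset.sum_range_succ']
  have h0 : eE (n + 1) 0 = eE n 0 := by unfold eE; rw [qb_zero, qb_zero]
  rw [h0]
  have hterm : ∀ m ∈ range (t + 1),
      eE (n + 1) (m + 1) * qb (n + 1 + (t + 1 - (m + 1))) (t + 1 - (m + 1))
        = eE n (m + 1) * qb (n + 1 + (t + 1 - (m + 1))) (t + 1 - (m + 1))
          - gq ^ (n + 1) * (eE n m * qb (n + 1 + (t - m)) (t - m)) := by
    intro m hm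
    rw [eE_succ]
    rw [show t + 1 - (m + 1) = t - m by omega]
    ring
  rw [Finset.sum_congr rfl hterm, Finset.sum_sub_distrib, Finset.mul_sum]
  ring

lemma R2 (n s : ℕ) (hs : 1 ≤ s) : QQ n s = PP n s + gq ^ (n + 1) * QQ n (s - 1) := by
  obtain ⟨t, rfl⟩ : ∃ t, s = t + 1 := ⟨s - 1, by omega⟩
  simp only [Nat.add_sub_cancel]
  unfold PP QQ
  rw [Finset.sum_range_succ]
  conv_rhs => rw [Finset.sum_range_succ]
  simp only [Nat.sub_self, Nat.add_zero]
  rw [qb_zero, qb_zero]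
  have hterm : ∀ m ∈ range (t + 1),
      eE n m * qb (n + 1 + (t + 1 - m)) (t + 1 - m)
        = eE n m * qb (n + (t + 1 - m)) (t + 1 - m)
          + gq ^ (n + 1) * (eE n m * qb (n + 1 + (t - m)) (t - m)) := by
    intro m hm
    rw [Finset.mem_range] at hm
    rw [show t + 1 - m = (t - m) + 1 by omega, h_pascal]
    ring
  rw [Finset.sum_congr rfl hterm, Finset.sum_add_distrib, Finset.mul_sum]
  ring

lemma PP_zero_eq (s : ℕ) (hs : 1 ≤ s) : PP 0 s = 0 := by
  unfold PP
  rw [← Finset.sum_subset (Finset.range_subset_range.mpr (show 2 ≤ s + 1 by omega))]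
  · rw [Finset.sum_range_succ, Finset.sum_range_one]
    have e0 : eE 0 0 = 1 := by unfold eE; rw [qb_zero]; norm_num
    have e1 : eE 0 1 = -1 := by unfold eE; rw [show 1 * (1 - 1) / 2 = 0 by norm_num, qb_self]; norm_num
    rw [e0, e1, Nat.zero_add, Nat.zero_add, Nat.sub_zero, qb_self, qb_self]
    ring
  · intro m _ hm2
    rw [Finset.mem_range] at hm2
    have : qb (0 + 1) m = 0 := qb_eq_zero (by omega)
    unfold eE
    rw [this]
    ring

lemma PP_eq_zero (n s : ℕ) (hs : 1 ≤ s) : PP n s = 0 := by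
  induction n with
  | zero => exact PP_zero_eq s hs
  | succ n ih => rw [R1 n s hs, R2 n s hs, ih]; ring


lemma gq_pow (j : ℕ) : gq ^ j = (-1) ^ j / φ ^ (2 * j) := by
  have h : gq = -1 / φ ^ 2 := by
    rw [gq, div_eq_div_iff goldenRatio_ne_zero (pow_ne_zero _ goldenRatio_ne_zero)]
    linear_combination φ * goldenConj_mul_goldenRatio
  rw [h, div_pow, ← pow_mul]

lemma fib_real (m : ℕ) : (Nat.fib m : ℝ) = φ ^ m * (1 - gq ^ m) / √5 := by
  rw [Real.coe_fib_eq]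
  have h2 : φ ^ m * gq ^ m = ψ ^ m := by
    rw [gq, ← mul_pow, mul_div_cancel₀ _ goldenRatio_ne_zero]
  rw [← h2]
  ring

lemma fib_factor (N r : ℕ) :
    (Nat.fib (N - r) : ℝ) / (Nat.fib (r + 1) : ℝ)
      = (φ ^ (N - r) / φ ^ (r + 1)) * ((1 - gq ^ (N - r)) / (1 - gq ^ (r + 1))) := by
  rw [fib_real, fib_real]
  have h5 : (√5 : ℝ) ≠ 0 := by positivity
  have hp : (φ : ℝ) ^ (r + 1) ≠ 0 := pow_ne_zero _ goldenRatio_ne_zero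
  have hq : (1 : ℝ) - gq ^ (r + 1) ≠ 0 := one_sub_gq_pow_ne_zero (by omega)
  field_simp

lemma fibonomial_eq_zero {N k : ℕ} (h : N < k) : fibonomial N k = 0 := by
  apply Finset.prod_eq_zero (Finset.mem_range.mpr h)
  simp

lemma fibonomial_eq {N k : ℕ} (h : k ≤ N) :
    fibonomial N k = (φ ^ (k * N) / φ ^ (k * k)) * qb N k := by
  unfold fibonomial
  have step : ∀ r ∈ range k, (Nat.fib (N - r) : ℝ) / (Nat.fib (r + 1) : ℝ)
      = (φ ^ (N - r) / φ ^ (r + 1)) * ((1 - gq ^ (N - r)) / (1 - gq ^ (r + 1))) :=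
    fun r _ => fib_factor N r
  rw [Finset.prod_congr rfl step, Finset.prod_mul_distrib]
  have : ∏ r ∈ range k, (φ ^ (N - r) / φ ^ (r + 1))
      = φ ^ (k * N) / φ ^ (k * k) := by
    rw [Finset.prod_div_distrib, Finset.prod_pow_eq_pow_sum, Finset.prod_pow_eq_pow_sum]
    have hb : (∑ r ∈ range k, (r + 1)) * 2 = k * k + k := by
      have h1 := Finset.sum_range_id_mul_two (k + 1)
      have h2 : ∑ i ∈ range (k + 1), i = ∑ r ∈ range k, (r + 1) := by
        rw [Finset.sum_range_succ']
        simp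
      rw [h2] at h1
      rw [h1]
      simp [Nat.add_sub_cancel]
      ring
    have ha : (∑ r ∈ range k, (N - r)) + (∑ r ∈ range k, (r + 1)) = k * N + k := by
      rw [← Finset.sum_add_distrib]
      rw [Finset.sum_congr rfl (fun r hr => show N - r + (r + 1) = N + 1 by
        rw [Finset.mem_range] at hr; omega)]
      rw [Finset.sum_const, Finset.card_range, smul_eq_mul, Nat.mul_succ]
    rw [div_eq_div_iff (pow_ne_zero _ goldenRatio_ne_zero) (pow_ne_zero _ goldenRatio_ne_zero),
      ← pow_add, ← pow_add]
    congr 1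
    generalize hA : (∑ r ∈ range k, (N - r)) = A at *
    generalize hB : (∑ r ∈ range k, (r + 1)) = B at *
    generalize hKK : k * k = KK at *
    generalize hKN : k * N = KN at *
    omega
  rw [this, qb]

lemma even_mul_pred (m : ℕ) : 2 * (m * (m - 1) / 2) = m * (m - 1) := by
  have hev : Even (m * (m - 1)) := by
    rcases m with _ | m'
    · simp
    · simpa [Nat.add_sub_cancel, mul_comm] using Nat.even_mul_succ_self m'
  obtain ⟨c, hc⟩ := hev
  omega

lemma key_term (n s m : ℕ) (hm : m ≤ s) :
    (-1 : ℝ) ^ (m * (m - 1) / 2 + m) * fibonomial (n + 1) m * fibonomial (n + (s - m)) (s - m)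
      = φ ^ (n * s) * (eE n m * qb (n + (s - m)) (s - m)) := by
  rcases le_or_gt m (n + 1) with h | h
  · set t := s - m with ht
    have htle : t ≤ n + t := by omega
    rw [fibonomial_eq h, fibonomial_eq htle]
    unfold eE
    rw [gq_pow (m * (m - 1) / 2), even_mul_pred]
    have hexp : m * (n + 1) + t * (n + t) + m * (m - 1) = n * s + (m * m + t * t) := by
      have hs' : s = m + t := by omega
      rw [hs']
      rcases m with _ | m'
      · simp only [Nat.zero_mul, Nat.mul_zero, Nat.zero_add, Nat.add_zero]
        ring
      · simp only [Nat.add_sub_cancel]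
        ring
    set Φ : ℝ := goldenRatio with hPhi
    have hne : Φ ≠ 0 := goldenRatio_ne_zero
    have h5 : Φ ^ (m * (n + 1)) * Φ ^ (t * (n + t)) * Φ ^ (m * (m - 1))
        = Φ ^ (n * s) * (Φ ^ (m * m) * Φ ^ (t * t)) := by
      rw [← pow_add, ← pow_add, ← pow_add, ← pow_add, hexp]
    have hMM : Φ ^ (m * m) ≠ 0 := pow_ne_zero _ hne
    have hTT : Φ ^ (t * t) ≠ 0 := pow_ne_zero _ hne
    have hD : Φ ^ (m * (m - 1)) ≠ 0 := pow_ne_zero _ hne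
    rw [pow_add]
    field_simp
    linear_combination (qb (n + 1) m * qb (n + t) t) * h5
  · rw [fibonomial_eq_zero (show n + 1 < m from h)]
    unfold eE
    rw [qb_eq_zero (show n + 1 < m from h)]
    ring

lemma key (n s : ℕ) (hs : 1 ≤ s) :
    ∑ m ∈ range (s + 1),
      (-1 : ℝ) ^ (m * (m - 1) / 2 + m) * fibonomial (n + 1) m * fibonomial (n + (s - m)) (s - m) = 0 := by
  have : ∀ m ∈ range (s + 1),
      (-1 : ℝ) ^ (m * (m - 1) / 2 + m) * fibonomial (n + 1) m * fibonomial (n + (s - m)) (s - m)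
        = φ ^ (n * s) * (eE n m * qb (n + (s - m)) (s - m)) := by
    intro m hm
    rw [Finset.mem_range] at hm
    exact key_term n s m (by omega)
  rw [Finset.sum_congr rfl this, ← Finset.mul_sum]
  have := PP_eq_zero n s hs
  rw [PP] at this
  rw [this, mul_zero]

lemma fibonomial_zero (n : ℕ) : fibonomial n 0 = 1 := by simp [fibonomial]

noncomputable def bb (n i l : ℕ) : ℝ :=
  if l = i + 1 then (1 : ℝ)
  else if l ≤ i then
    (-1 : ℝ) ^ (((i - l) + 1) * (i - l) / 2) * fibonomial (n + 1) ((i - l) + 1)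
  else 0

noncomputable def tt (n l j : ℕ) : ℝ :=
  if j ≤ l then (-1 : ℝ) ^ (l - j) * fibonomial (n + (l - j)) (l - j) else 0

lemma L1 (n i j : ℕ) (hj : j ≤ i) :
    ∑ l ∈ range (i + 1), bb n i l * tt n l j
      = (-1 : ℝ) ^ (i - j) * fibonomial (n + (i + 1 - j)) (i + 1 - j) := by
  set s := i + 1 - j with hs
  have hs1 : 1 ≤ s := by omega
  set G : ℕ → ℝ := fun u =>
    (-1 : ℝ) ^ (u * (u - 1) / 2 + u) * fibonomial (n + 1) u * fibonomial (n + (s - u)) (s - u)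
    with hG
  have hkey : ∑ u ∈ range (s + 1), G u = 0 := key n s hs1
  have h1 : ∑ l ∈ range (i + 1), bb n i l * tt n l j
      = ∑ l ∈ Finset.Ico j (i + 1), bb n i l * tt n l j := by
    rw [Finset.range_eq_Ico]
    refine (Finset.sum_subset (Finset.Ico_subset_Ico (Nat.zero_le j) le_rfl) ?_).symm
    intro l hl hnot
    rw [Finset.mem_Ico] at hl hnot
    have ht : tt n l j = 0 := by unfold tt; rw [if_neg (by omega)]
    rw [ht, mul_zero]
  rw [h1, Finset.sum_Ico_eq_sum_range]
  rw [show i + 1 - j = s from rfl]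
  have h2 : ∀ m ∈ range s, bb n i (j + m) * tt n (j + m) j = (-1 : ℝ) ^ s * G (s - m) := by
    intro m hm
    rw [Finset.mem_range] at hm
    unfold bb tt
    rw [if_neg (by omega), if_pos (by omega), if_pos (by omega : j ≤ j + m)]
    rw [show i - (j + m) = s - m - 1 by omega, show j + m - j = m by omega,
      show s - m - 1 + 1 = s - m by omega]
    rw [hG]
    simp only []
    rw [show s - (s - m) = m by omega]
    rw [pow_add]
    have e5 : ((-1 : ℝ)) ^ m = (-1) ^ s * (-1) ^ (s - m) := by
      rw [← pow_add]
      exact negpow (by omega)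
    rw [e5]
    ring
  rw [Finset.sum_congr rfl h2, ← Finset.mul_sum]
  have h3 : ∑ m ∈ range s, G (s - m) = ∑ m ∈ range s, G (m + 1) := by
    rw [← Finset.sum_range_reflect (fun m => G (m + 1)) s]
    refine Finset.sum_congr rfl fun m hm => ?_
    rw [Finset.mem_range] at hm
    congr 1
    omega
  rw [h3]
  have h4 : ∑ m ∈ range s, G (m + 1) = -G 0 := by
    have := Finset.sum_range_succ' G s
    rw [hkey] at this
    linarith [this]
  rw [h4]
  have hG0 : G 0 = fibonomial (n + s) s := by
    rw [hG]
    simp only [Nat.sub_zero, Nat.zero_mul, Nat.mul_zero, pow_zero]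
    rw [fibonomial_zero]
    norm_num
  rw [hG0]
  have e6 : ((-1 : ℝ)) ^ (i - j) = (-1) ^ (s + 1) := negpow (by omega)
  rw [e6, pow_succ]
  ring

lemma sum_lt (n k i j : ℕ) (hij : j ≤ i) (hk : i + 1 < k) :
    ∑ l ∈ range k, bb n i l * tt n l j = 0 := by
  have h1 : ∑ l ∈ range k, bb n i l * tt n l j
      = ∑ l ∈ range (i + 2), bb n i l * tt n l j := by
    refine (Finset.sum_subset (Finset.range_subset_range.mpr (by omega)) ?_).symm
    intro l hl hnot
    rw [Finset.mem_range] at hl hnot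
    have hb : bb n i l = 0 := by unfold bb; rw [if_neg (by omega), if_neg (by omega)]
    rw [hb, zero_mul]
  rw [h1, Finset.sum_range_succ, L1 n i j hij]
  have hb1 : bb n i (i + 1) = 1 := by unfold bb; rw [if_pos rfl]
  have ht1 : tt n (i + 1) j = (-1 : ℝ) ^ (i + 1 - j) * fibonomial (n + (i + 1 - j)) (i + 1 - j) := by
    unfold tt; rw [if_pos (by omega)]
  rw [hb1, ht1]
  have e : ((-1 : ℝ)) ^ (i + 1 - j) = (-1) ^ (i - j) * (-1) := by
    rw [show i + 1 - j = (i - j) + 1 by omega, pow_succ]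
  rw [e]
  ring

lemma sum_gt (n k i j : ℕ) (hij : i < j) (hjk : j < k) :
    ∑ l ∈ range k, bb n i l * tt n l j = if j = i + 1 then 1 else 0 := by
  rcases eq_or_ne j (i + 1) with hji | hji
  · rw [if_pos hji]
    subst hji
    rw [Finset.sum_eq_single_of_mem (i + 1) (Finset.mem_range.mpr hjk)]
    · have hb1 : bb n i (i + 1) = 1 := by unfold bb; rw [if_pos rfl]
      have ht1 : tt n (i + 1) (i + 1) = 1 := by
        unfold tt
        rw [if_pos le_rfl, Nat.sub_self]
        rw [fibonomial_zero]
        norm_num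
      rw [hb1, ht1, one_mul]
    · intro l _ hne
      rcases le_or_gt l i with h | h
      · have ht : tt n l (i + 1) = 0 := by unfold tt; rw [if_neg (by omega)]
        rw [ht, mul_zero]
      · have hb : bb n i l = 0 := by unfold bb; rw [if_neg (by omega), if_neg (by omega)]
        rw [hb, zero_mul]
  · rw [if_neg hji]
    apply Finset.sum_eq_zero
    intro l _
    rcases le_or_gt l (i + 1) with h | h
    · have ht : tt n l j = 0 := by unfold tt; rw [if_neg (by omega)]
      rw [ht, mul_zero]
    · have hb : bb n i l = 0 := by unfold bb; rw [if_neg (by omega), if_neg (by omega)]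
      rw [hb, zero_mul]

theorem fibonomial_det_hessenberg_column (n k : ℕ) (hk : 1 ≤ k) :
    fibonomial (n + k) k =
      Matrix.det (Matrix.of fun i j : Fin k =>
        if (j : ℕ) = (i : ℕ) + 1 then (1 : ℝ)
        else if (j : ℕ) ≤ (i : ℕ) then
          (-1 : ℝ) ^ ((((i : ℕ) - (j : ℕ)) + 1) * ((i : ℕ) - (j : ℕ)) / 2) *
            fibonomial (n + 1) (((i : ℕ) - (j : ℕ)) + 1)
        else 0) := by
  obtain ⟨k', rfl⟩ : ∃ k', k = k' + 1 := ⟨k - 1, by omega⟩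
  set B : Matrix (Fin (k' + 1)) (Fin (k' + 1)) ℝ :=
    Matrix.of fun i j : Fin (k' + 1) => bb n (i : ℕ) (j : ℕ) with hB
  have hBeq : (Matrix.of fun i j : Fin (k' + 1) =>
      if (j : ℕ) = (i : ℕ) + 1 then (1 : ℝ)
      else if (j : ℕ) ≤ (i : ℕ) then
        (-1 : ℝ) ^ ((((i : ℕ) - (j : ℕ)) + 1) * ((i : ℕ) - (j : ℕ)) / 2) *
          fibonomial (n + 1) (((i : ℕ) - (j : ℕ)) + 1)
      else 0) = B := rfl
  rw [hBeq]
  set T : Matrix (Fin (k' + 1)) (Fin (k' + 1)) ℝ :=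
    Matrix.of fun l j : Fin (k' + 1) => tt n (l : ℕ) (j : ℕ) with hT
  have hdetT : T.det = 1 := by
    rw [Matrix.det_of_lowerTriangular T (fun i j hlt => ?_)]
    · rw [Finset.prod_eq_one]
      intro i _
      show tt n (i : ℕ) (i : ℕ) = 1
      unfold tt
      rw [if_pos le_rfl, Nat.sub_self, fibonomial_zero]
      norm_num
    · show tt n (i : ℕ) (j : ℕ) = 0
      unfold tt
      have : (i : ℕ) < (j : ℕ) := hlt
      rw [if_neg (by omega)]
  have hmul : ∀ a b : Fin (k' + 1),
      (B * T) a b = ∑ l ∈ range (k' + 1), bb n (a : ℕ) l * tt n l (b : ℕ) := by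
    intro a b
    rw [Matrix.mul_apply]
    exact Fin.sum_univ_eq_sum_range (fun l => bb n (a : ℕ) l * tt n l (b : ℕ)) (k' + 1)
  -- the rotated matrix
  set ρ : Equiv.Perm (Fin (k' + 1)) := (finRotate (k' + 1))⁻¹ with hρdef
  have hρ : ∀ i : Fin (k' + 1), ρ i = i - 1 := by
    intro i
    have h : finRotate (k' + 1) (i - 1) = i := by
      rw [finRotate_succ_apply, sub_add_cancel]
    rw [hρdef]
    conv_lhs => rw [← h]
    exact (finRotate (k' + 1)).symm_apply_apply _
  have hρ0 : ((ρ 0 : Fin (k' + 1)) : ℕ) = k' := by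
    rw [hρ 0, Fin.coe_sub_one, if_pos rfl]
  have hρi : ∀ i : Fin (k' + 1), i ≠ 0 → ((ρ i : Fin (k' + 1)) : ℕ) = (i : ℕ) - 1 := by
    intro i hi
    rw [hρ i, Fin.coe_sub_one, if_neg hi]
  have hupper : ∀ i j : Fin (k' + 1), (j : Fin (k' + 1)) < i → (B * T) (ρ i) j = 0 := by
    intro i j hlt
    have hi0 : i ≠ 0 := by
      intro h
      subst h
      exact absurd hlt (by simp [Fin.lt_iff_val_lt_val])
    have hival : 1 ≤ (i : ℕ) := by
      rcases Nat.eq_zero_or_pos (i : ℕ) with h | h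
      · exact absurd (Fin.ext h) hi0
      · omega
    have hji : (j : ℕ) < (i : ℕ) := hlt
    rw [hmul, hρi i hi0]
    exact sum_lt n (k' + 1) ((i : ℕ) - 1) (j : ℕ) (by omega) (by omega)
  have hdetrot : Matrix.det (Matrix.of fun i j => (B * T) (ρ i) j)
      = (-1 : ℝ) ^ k' * fibonomial (n + (k' + 1)) (k' + 1) := by
    rw [Matrix.det_of_upperTriangular (M := Matrix.of fun i j => (B * T) (ρ i) j)
      (fun i j hlt => hupper i j hlt)]
    rw [Finset.prod_eq_single_of_mem (0 : Fin (k' + 1)) (Finset.mem_univ _)]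
    · show (B * T) (ρ 0) 0 = _
      rw [hmul, hρ0]
      show ∑ l ∈ range (k' + 1), bb n k' l * tt n l ((0 : Fin (k' + 1)) : ℕ) = _
      rw [Fin.val_zero]
      have := L1 n k' 0 (Nat.zero_le k')
      rw [this]
      norm_num
    · intro i _ hi0
      show (B * T) (ρ i) i = 1
      rw [hmul, hρi i hi0]
      have hival : 1 ≤ (i : ℕ) := by
        rcases Nat.eq_zero_or_pos (i : ℕ) with h | h
        · exact absurd (Fin.ext h) hi0
        · omega
      rw [sum_gt n (k' + 1) ((i : ℕ) - 1) (i : ℕ) (by omega) i.isLt]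
      rw [if_pos (by omega)]
  have hperm := Matrix.det_permute ρ (B * T)
  have hsign : (Equiv.Perm.sign ρ : ℝ) = (-1 : ℝ) ^ k' := by
    rw [hρdef, Equiv.Perm.sign_inv, sign_finRotate]
    push_cast
    norm_num
  have hrotdet2 : Matrix.det (Matrix.of fun i j => (B * T) (ρ i) j)
      = Matrix.det fun i => (B * T) (ρ i) := rfl
  have hBT : (B * T).det = fibonomial (n + (k' + 1)) (k' + 1) := by
    have h2 := hperm.symm.trans hdetrot
    rw [hsign] at h2
    have hne : ((-1 : ℝ)) ^ k' ≠ 0 := pow_ne_zero _ (by norm_num)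
    exact mul_left_cancel₀ hne h2
  rw [← hBT, Matrix.det_mul, hdetT, mul_one]
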